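/- Let k be a commutative ring, A an associative unital k-algebra, and λ ∈ k. The shift map d : (ℕ → A) → (ℕ → A) defined by d(f)(n) = f(n+1) is a derivation of weight λ for the λ-Hurwitz product: d is k-linear, d(e) = 0, and d(f ·^λ g) = d(f) ·^λ g + f ·^λ d(g) + λ·(d(f) ·^λ d(g)) for all f, g : ℕ → A. -/

import Mathlib

/-- The `lam`-Hurwitz product of sequences in a `k`-algebra `A`. -/
def hurwitz {k A : Type*} [CommRing k] [Ring A] [Algebra k A]
    (lam : k) (f g : ℕ → A) : ℕ → A := fun n =>
  ∑ p ∈ Finset.HasAntidiagonal.antidiagonal n, ∑ q ∈ Finset.HasAntidiagonal.antidiagonal p.2,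
    (Nat.factorial n / (Nat.factorial p.1 * Nat.factorial q.1 * Nat.factorial q.2)) •
      lam ^ q.2 • (f (p.1 + q.2) * g (q.1 + q.2))

/-- The sequence `e` with `e 0 = 1` and `e n = 0` for `n > 0`. -/
def hurwitzUnit {A : Type*} [Ring A] : ℕ → A := fun n => if n = 0 then 1 else 0

/-- The shift map `d(f)(n) = f(n+1)`. -/
def shift {A : Type*} (f : ℕ → A) : ℕ → A := fun n => f (n + 1)

/-- triple multinomial -/
def mul3 (a c d : ℕ) : ℕ := (a + c + d).choose (c + d) * (c + d).choose d

lemma mul3_spec (a c d : ℕ) :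
    mul3 a c d * (a.factorial * c.factorial * d.factorial) = (a + c + d).factorial := by
  have h1 : (c + d).choose d * d.factorial * c.factorial = (c + d).factorial := by
    have := Nat.choose_mul_factorial_mul_factorial (Nat.le_add_left d c)
    simpa [Nat.add_sub_cancel] using this
  have h2 : (a + c + d).choose (c + d) * (c + d).factorial * a.factorial
      = (a + c + d).factorial := by
    have := Nat.choose_mul_factorial_mul_factorial
      (show c + d ≤ a + c + d by omega)
    have e : a + c + d - (c + d) = a := by omega
    rw [e] at this
    convert this using 2
  calc mul3 a c d * (a.factorial * c.factorial * d.factorial)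
      = (a + c + d).choose (c + d) * ((c + d).choose d * d.factorial * c.factorial)
        * a.factorial := by unfold mul3; ring
    _ = (a + c + d).factorial := by rw [h1, h2]

lemma fac_div_eq_mul3 (a c d : ℕ) :
    (a + c + d).factorial / (a.factorial * c.factorial * d.factorial) = mul3 a c d := by
  refine Nat.div_eq_of_eq_mul_left ?_ (mul3_spec a c d).symm
  positivity

/-- Pascal-type helper term. -/
lemma mul3_pascal_term (a c d : ℕ) :
    (if a = 0 then 0 else mul3 (a - 1) c d) * (a.factorial * c.factorial * d.factorial)
      = a * (a + c + d - 1).factorial := by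
  rcases a with _ | a'
  · simp
  · simp only [Nat.succ_ne_zero, if_false, Nat.add_sub_cancel, Nat.succ_sub_one]
    have hf : (a' + 1).factorial = (a' + 1) * a'.factorial := Nat.factorial_succ a'
    calc mul3 a' c d * ((a' + 1).factorial * c.factorial * d.factorial)
        = (a' + 1) * (mul3 a' c d * (a'.factorial * c.factorial * d.factorial)) := by
          rw [hf]; ring
      _ = (a' + 1) * (a' + c + d).factorial := by rw [mul3_spec]
      _ = (a' + 1) * (a' + 1 + c + d - 1).factorial := by congr 2; omega

lemma mul3_swap12 (a c d : ℕ) : mul3 a c d = mul3 c a d := by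
  have hpos : 0 < a.factorial * c.factorial * d.factorial := by positivity
  apply Nat.eq_of_mul_eq_mul_right hpos
  rw [mul3_spec]
  symm
  calc mul3 c a d * (a.factorial * c.factorial * d.factorial)
      = mul3 c a d * (c.factorial * a.factorial * d.factorial) := by ring
    _ = (c + a + d).factorial := mul3_spec c a d
    _ = (a + c + d).factorial := by rw [add_comm c a]

lemma mul3_swap13 (a c d : ℕ) : mul3 a c d = mul3 d c a := by
  have hpos : 0 < a.factorial * c.factorial * d.factorial := by positivity
  apply Nat.eq_of_mul_eq_mul_right hpos
  rw [mul3_spec]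
  symm
  calc mul3 d c a * (a.factorial * c.factorial * d.factorial)
      = mul3 d c a * (d.factorial * c.factorial * a.factorial) := by ring
    _ = (d + c + a).factorial := mul3_spec d c a
    _ = (a + c + d).factorial := by congr 1; omega

lemma mul3_pascal {a c d n : ℕ} (h : a + c + d = n + 1) :
    mul3 a c d =
      (if a = 0 then 0 else mul3 (a - 1) c d) +
      (if c = 0 then 0 else mul3 a (c - 1) d) +
      (if d = 0 then 0 else mul3 a c (d - 1)) := by
  have hpos : 0 < a.factorial * c.factorial * d.factorial := by positivity
  apply Nat.eq_of_mul_eq_mul_right hpos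
  rw [add_mul, add_mul, mul3_spec, mul3_pascal_term]
  have hc : (if c = 0 then 0 else mul3 a (c - 1) d) * (a.factorial * c.factorial * d.factorial)
      = c * (a + c + d - 1).factorial := by
    have t := mul3_pascal_term c a d
    rw [mul3_swap12 (c-1) a d] at t
    calc (if c = 0 then 0 else mul3 a (c - 1) d) * (a.factorial * c.factorial * d.factorial)
        = (if c = 0 then 0 else mul3 a (c - 1) d) * (c.factorial * a.factorial * d.factorial) := by
          ring
      _ = c * (c + a + d - 1).factorial := t
      _ = c * (a + c + d - 1).factorial := by congr 2; omega
  have hd : (if d = 0 then 0 else mul3 a c (d - 1)) * (a.factorial * c.factorial * d.factorial)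
      = d * (a + c + d - 1).factorial := by
    have t := mul3_pascal_term d c a
    rw [mul3_swap13 (d-1) c a] at t
    calc (if d = 0 then 0 else mul3 a c (d - 1)) * (a.factorial * c.factorial * d.factorial)
        = (if d = 0 then 0 else mul3 a c (d - 1)) * (d.factorial * c.factorial * a.factorial) := by
          ring
      _ = d * (d + c + a - 1).factorial := t
      _ = d * (a + c + d - 1).factorial := by congr 2; omega
  rw [hc, hd]
  have h1 : a + c + d - 1 = n := by omega
  rw [h1]
  have h2 : a * n.factorial + c * n.factorial + d * n.factorial
      = (a + c + d) * n.factorial := by ring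
  rw [h2, h, Nat.factorial_succ]

/-- The finset of triples summing to `n`. -/
def T3 (n : ℕ) : Finset (ℕ × ℕ × ℕ) :=
  (Finset.range (n+1) ×ˢ Finset.range (n+1) ×ˢ Finset.range (n+1)).filter
    (fun x => x.1 + x.2.1 + x.2.2 = n)

lemma mem_T3 {n : ℕ} {x : ℕ × ℕ × ℕ} : x ∈ T3 n ↔ x.1 + x.2.1 + x.2.2 = n := by
  simp only [T3, Finset.mem_filter, Finset.mem_product, Finset.mem_range]
  constructor
  · tauto
  · intro h; omega

lemma double_antidiag {A : Type*} [AddCommMonoid A] (n : ℕ) (F : ℕ → ℕ → ℕ → A) :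
    (∑ p ∈ Finset.HasAntidiagonal.antidiagonal n, ∑ q ∈ Finset.HasAntidiagonal.antidiagonal p.2, F p.1 q.1 q.2)
      = ∑ x ∈ T3 n, F x.1 x.2.1 x.2.2 := by
  rw [Finset.sum_sigma']
  refine Finset.sum_nbij' (fun x => (x.1.1, x.2)) (fun y => ⟨(y.1, y.2.1 + y.2.2), y.2⟩)
    ?_ ?_ ?_ ?_ ?_
  · rintro ⟨p, q⟩ h
    simp only [Finset.mem_sigma, Finset.HasAntidiagonal.mem_antidiagonal] at h
    simp only [mem_T3]
    omega
  · rintro ⟨a, c, d⟩ hy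
    rw [mem_T3] at hy
    simp only [Finset.mem_sigma, Finset.HasAntidiagonal.mem_antidiagonal] at hy ⊢
    exact ⟨by omega, trivial⟩
  · rintro ⟨⟨p1, p2⟩, q⟩ h
    simp only [Finset.mem_sigma, Finset.HasAntidiagonal.mem_antidiagonal] at h
    obtain ⟨h1, h2⟩ := h
    subst h2
    rfl
  · intro y hy; rfl
  · rintro ⟨p, q⟩ h; rfl

lemma hurwitz_eq_sum_T3 {k A : Type*} [CommRing k] [Ring A] [Algebra k A]
    (lam : k) (f g : ℕ → A) (n : ℕ) :
    hurwitz lam f g n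
      = ∑ x ∈ T3 n, mul3 x.1 x.2.1 x.2.2 • lam ^ x.2.2 • (f (x.1 + x.2.2) * g (x.2.1 + x.2.2)) := by
  unfold hurwitz
  rw [← double_antidiag n
    (fun a c d => mul3 a c d • lam ^ d • (f (a + d) * g (c + d)))]
  refine Finset.sum_congr rfl fun p hp => Finset.sum_congr rfl fun q hq => ?_
  simp only [Finset.HasAntidiagonal.mem_antidiagonal] at hp hq
  have hn : n = p.1 + q.1 + q.2 := by omega
  rw [hn, fac_div_eq_mul3]

section ShiftLemmas

variable {A : Type*} [AddCommMonoid A]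

lemma T3_shift1 (n : ℕ) (Y : ℕ × ℕ × ℕ → A) (h0 : ∀ x, x.1 = 0 → Y x = 0) :
    ∑ x ∈ T3 (n+1), Y x = ∑ x ∈ T3 n, Y (x.1 + 1, x.2.1, x.2.2) := by
  rw [← Finset.sum_filter_of_ne (p := fun x => x.1 ≠ 0)
    (fun x _ h => fun hx0 => h (h0 x hx0))]
  refine Finset.sum_nbij' (fun x => (x.1 - 1, x.2)) (fun x => (x.1 + 1, x.2)) ?_ ?_ ?_ ?_ ?_
  · rintro ⟨a, c, d⟩ h
    simp only [Finset.mem_filter, mem_T3] at h ⊢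
    omega
  · rintro ⟨a, c, d⟩ h
    simp only [Finset.mem_filter, mem_T3] at h ⊢
    omega
  · rintro ⟨a, c, d⟩ h
    simp only [Finset.mem_filter, mem_T3] at h
    simp only [Prod.mk.injEq, eq_self_iff_true, and_true, true_and]
    omega
  · rintro ⟨a, c, d⟩ h
    simp
  · rintro ⟨a, c, d⟩ h
    simp only [Finset.mem_filter, mem_T3] at h
    have : a - 1 + 1 = a := by omega
    simp [this]

lemma T3_shift2 (n : ℕ) (Y : ℕ × ℕ × ℕ → A) (h0 : ∀ x, x.2.1 = 0 → Y x = 0) :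
    ∑ x ∈ T3 (n+1), Y x = ∑ x ∈ T3 n, Y (x.1, x.2.1 + 1, x.2.2) := by
  rw [← Finset.sum_filter_of_ne (p := fun x => x.2.1 ≠ 0)
    (fun x _ h => fun hx0 => h (h0 x hx0))]
  refine Finset.sum_nbij' (fun x => (x.1, x.2.1 - 1, x.2.2)) (fun x => (x.1, x.2.1 + 1, x.2.2))
    ?_ ?_ ?_ ?_ ?_
  · rintro ⟨a, c, d⟩ h
    simp only [Finset.mem_filter, mem_T3] at h ⊢
    omega
  · rintro ⟨a, c, d⟩ h
    simp only [Finset.mem_filter, mem_T3] at h ⊢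
    omega
  · rintro ⟨a, c, d⟩ h
    simp only [Finset.mem_filter, mem_T3] at h
    simp only [Prod.mk.injEq, eq_self_iff_true, and_true, true_and]
    omega
  · rintro ⟨a, c, d⟩ h
    simp
  · rintro ⟨a, c, d⟩ h
    simp only [Finset.mem_filter, mem_T3] at h
    have : c - 1 + 1 = c := by omega
    simp [this]

lemma T3_shift3 (n : ℕ) (Y : ℕ × ℕ × ℕ → A) (h0 : ∀ x, x.2.2 = 0 → Y x = 0) :
    ∑ x ∈ T3 (n+1), Y x = ∑ x ∈ T3 n, Y (x.1, x.2.1, x.2.2 + 1) := by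
  rw [← Finset.sum_filter_of_ne (p := fun x => x.2.2 ≠ 0)
    (fun x _ h => fun hx0 => h (h0 x hx0))]
  refine Finset.sum_nbij' (fun x => (x.1, x.2.1, x.2.2 - 1)) (fun x => (x.1, x.2.1, x.2.2 + 1))
    ?_ ?_ ?_ ?_ ?_
  · rintro ⟨a, c, d⟩ h
    simp only [Finset.mem_filter, mem_T3] at h ⊢
    omega
  · rintro ⟨a, c, d⟩ h
    simp only [Finset.mem_filter, mem_T3] at h ⊢
    omega
  · rintro ⟨a, c, d⟩ h
    simp only [Finset.mem_filter, mem_T3] at h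
    simp only [Prod.mk.injEq, eq_self_iff_true, and_true, true_and]
    omega
  · rintro ⟨a, c, d⟩ h
    simp
  · rintro ⟨a, c, d⟩ h
    simp only [Finset.mem_filter, mem_T3] at h
    have : d - 1 + 1 = d := by omega
    simp [this]

end ShiftLemmas

/-- the shift map is a derivation of weight `lam` for the
`lam`-Hurwitz product on `ℕ → A`. -/
theorem shift_weighted_derivation_hurwitz
    {k A : Type*} [CommRing k] [Ring A] [Algebra k A] (lam : k) :
    (∀ f g : ℕ → A, shift (f + g) = shift f + shift g) ∧
    (∀ (c : k) (f : ℕ → A), shift (c • f) = c • shift f) ∧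
    (shift (hurwitzUnit : ℕ → A) = 0) ∧
    (∀ f g : ℕ → A,
      shift (hurwitz lam f g) =
        hurwitz lam (shift f) g + hurwitz lam f (shift g) +
          lam • hurwitz lam (shift f) (shift g)) := by
  refine ⟨fun f g => rfl, fun c f => rfl, ?_, fun f g => ?_⟩
  · funext n; simp [shift, hurwitzUnit]
  · funext n
    show hurwitz lam f g (n + 1)
        = hurwitz lam (shift f) g n + hurwitz lam f (shift g) n
          + lam • hurwitz lam (shift f) (shift g) n
    rw [hurwitz_eq_sum_T3, hurwitz_eq_sum_T3, hurwitz_eq_sum_T3, hurwitz_eq_sum_T3,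
      Finset.smul_sum]
    have step1 :
        (∑ x ∈ T3 (n+1),
          mul3 x.1 x.2.1 x.2.2 • lam ^ x.2.2 • (f (x.1 + x.2.2) * g (x.2.1 + x.2.2)))
        = (∑ x ∈ T3 (n+1), (fun y : ℕ × ℕ × ℕ =>
              (if y.1 = 0 then 0 else mul3 (y.1 - 1) y.2.1 y.2.2) •
                lam ^ y.2.2 • (f (y.1 + y.2.2) * g (y.2.1 + y.2.2))) x)
        + (∑ x ∈ T3 (n+1), (fun y : ℕ × ℕ × ℕ =>
              (if y.2.1 = 0 then 0 else mul3 y.1 (y.2.1 - 1) y.2.2) •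
                lam ^ y.2.2 • (f (y.1 + y.2.2) * g (y.2.1 + y.2.2))) x)
        + (∑ x ∈ T3 (n+1), (fun y : ℕ × ℕ × ℕ =>
              (if y.2.2 = 0 then 0 else mul3 y.1 y.2.1 (y.2.2 - 1)) •
                lam ^ y.2.2 • (f (y.1 + y.2.2) * g (y.2.1 + y.2.2))) x) := by
      rw [← Finset.sum_add_distrib, ← Finset.sum_add_distrib]
      refine Finset.sum_congr rfl fun x hx => ?_
      rw [mul3_pascal (mem_T3.mp hx), add_smul, add_smul]
    rw [step1,
      T3_shift1 (n := n) (Y := fun y : ℕ × ℕ × ℕ =>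
        (if y.1 = 0 then 0 else mul3 (y.1 - 1) y.2.1 y.2.2) •
          lam ^ y.2.2 • (f (y.1 + y.2.2) * g (y.2.1 + y.2.2)))
        (by intro x hx; beta_reduce; rw [hx]; simp),
      T3_shift2 (n := n) (Y := fun y : ℕ × ℕ × ℕ =>
        (if y.2.1 = 0 then 0 else mul3 y.1 (y.2.1 - 1) y.2.2) •
          lam ^ y.2.2 • (f (y.1 + y.2.2) * g (y.2.1 + y.2.2)))
        (by intro x hx; beta_reduce; rw [hx]; simp),
      T3_shift3 (n := n) (Y := fun y : ℕ × ℕ × ℕ =>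
        (if y.2.2 = 0 then 0 else mul3 y.1 y.2.1 (y.2.2 - 1)) •
          lam ^ y.2.2 • (f (y.1 + y.2.2) * g (y.2.1 + y.2.2)))
        (by intro x hx; beta_reduce; rw [hx]; simp)]
    congr 1
    · congr 1
      · refine Finset.sum_congr rfl fun x hx => ?_
        simp only [Nat.succ_ne_zero, if_false, Nat.add_sub_cancel, shift]
        have : x.1 + 1 + x.2.2 = x.1 + x.2.2 + 1 := by omega
        rw [this]
      · refine Finset.sum_congr rfl fun x hx => ?_
        simp only [Nat.succ_ne_zero, if_false, Nat.add_sub_cancel, shift]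
        have : x.2.1 + 1 + x.2.2 = x.2.1 + x.2.2 + 1 := by omega
        rw [this]
    · refine Finset.sum_congr rfl fun x hx => ?_
      simp only [Nat.succ_ne_zero, if_false, Nat.add_sub_cancel, shift]
      have h1 : x.1 + (x.2.2 + 1) = x.1 + x.2.2 + 1 := by omega
      have h2 : x.2.1 + (x.2.2 + 1) = x.2.1 + x.2.2 + 1 := by omega
      rw [h1, h2, pow_succ, mul_comm, mul_smul, smul_comm (lam) (mul3 x.1 x.2.1 x.2.2)]
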